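/- For A ∈ ℂ^{n×n×p}, ‖A‖_F = √(trace₍₁₎(Aᴴ * A)), i.e., the tensor Frobenius norm squared equals the trace of the first frontal slice of Aᴴ * A. -/

import Mathlib

open Matrix

/-- The block circulant matrix of a third-order tensor given by its frontal faces. -/
def bcirc {n p : ℕ} (A : Fin p → Matrix (Fin n) (Fin n) ℂ) :
    Matrix (Fin p × Fin n) (Fin p × Fin n) ℂ :=
  fun ai bj => A (ai.1 - bj.1) ai.2 bj.2

/-- `unfold` stacks the frontal faces of a tensor vertically into a block column. -/
def unfold {n p : ℕ} (B : Fin p → Matrix (Fin n) (Fin n) ℂ) :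
    Matrix (Fin p × Fin n) (Fin n) ℂ :=
  fun ki j => B ki.1 ki.2 j

/-- `fold` is the inverse of `unfold`. -/
def fold {n p : ℕ} (M : Matrix (Fin p × Fin n) (Fin n) ℂ) :
    Fin p → Matrix (Fin n) (Fin n) ℂ :=
  fun k i j => M (k, i) j

/-- The tensor t-product `X * Y := fold (bcirc X · unfold Y)`. -/
noncomputable def tProd {n p : ℕ} (X Y : Fin p → Matrix (Fin n) (Fin n) ℂ) :
    Fin p → Matrix (Fin n) (Fin n) ℂ :=
  fold (bcirc X * unfold Y)

/-- The tensor transpose: conjugate-transpose each frontal slice and reverse the order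
of slices `2` through `p` (in zero-based face indexing, face `k ↦ (A (-k))ᴴ`). -/
def tTranspose {n p : ℕ} (A : Fin p → Matrix (Fin n) (Fin n) ℂ) :
    Fin p → Matrix (Fin n) (Fin n) ℂ :=
  fun k => (A (-k))ᴴ

/-- The trace of the first frontal slice of a tensor. -/
noncomputable def trace1 {n p : ℕ} [NeZero p] (A : Fin p → Matrix (Fin n) (Fin n) ℂ) : ℂ :=
  (A 0).trace

/-- Frobenius norm of a third-order tensor. -/
noncomputable def frobT {n p : ℕ} (A : Fin p → Matrix (Fin n) (Fin n) ℂ) : ℝ :=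
  Real.sqrt (∑ k : Fin p, ∑ i : Fin n, ∑ j : Fin n, ‖A k i j‖ ^ 2)

/-- `‖A‖_F = √(trace₍₁₎(Aᴴ * A))`: the tensor Frobenius norm is the square root of the
trace of the first frontal slice of `Aᴴ * A` (which is a nonnegative real number). -/
theorem frobT_eq_sqrt_trace1 {n p : ℕ} [NeZero p]
    (A : Fin p → Matrix (Fin n) (Fin n) ℂ) :
    frobT A = Real.sqrt (trace1 (tProd (tTranspose A) A)).re ∧
      (trace1 (tProd (tTranspose A) A)).im = 0 := by

  have key : trace1 (tProd (tTranspose A) A)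
      = ((∑ k : Fin p, ∑ i : Fin n, ∑ j : Fin n, ‖A k i j‖ ^ 2 : ℝ) : ℂ) := by
    simp only [trace1, tProd, tTranspose, bcirc, unfold, fold, Matrix.trace,
      Matrix.mul_apply, Matrix.diag, Matrix.conjTranspose_apply, Fintype.sum_prod_type]
    push_cast
    rw [Finset.sum_comm]
    refine Finset.sum_congr rfl fun k _ => ?_
    rw [Finset.sum_comm]
    refine Finset.sum_congr rfl fun i _ => Finset.sum_congr rfl fun j _ => ?_
    simp only [zero_sub, neg_neg]
    rw [show star (A k i j) = (starRingEnd ℂ) (A k i j) from rfl, ← Complex.normSq_eq_conj_mul_self]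
    norm_cast
    exact (Complex.sq_norm _).symm
  constructor
  · rw [frobT, key, Complex.ofReal_re]
  · rw [key, Complex.ofReal_im]
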